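/- Let X and Y be random variables on a probability space such that E[X] and E[Y] are well-defined and finite, and suppose that for some real η > 0 the strong ESI X ⊴_η Y holds, i.e. E[exp(η(X − Y))] ≤ 1. Then E[X] ≤ E[Y], and moreover the inequality is strict unless X = Y almost surely. -/
import Mathlib


open MeasureTheory

/-- Strong ESI implies ordering in expectation, strictly unless `X = Y` a.s. -/
theorem esi_expectation_order {Ω : Type*} [MeasurableSpace Ω]
    (P : Measure Ω) [IsProbabilityMeasure P]
    (X Y : Ω → ℝ) (hXm : Measurable X) (hYm : Measurable Y)
    (hX : Integrable X P) (hY : Integrable Y P)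
    (η : ℝ) (hη : 0 < η)
    (hESI : ∫⁻ ω, ENNReal.ofReal (Real.exp (η * (X ω - Y ω))) ∂P ≤ 1) :
    ∫ ω, X ω ∂P ≤ ∫ ω, Y ω ∂P ∧
      ((∫ ω, X ω ∂P) = ∫ ω, Y ω ∂P → X =ᵐ[P] Y) := by
  set Z : Ω → ℝ := fun ω => η * (X ω - Y ω) with hZdef
  have hZm : Measurable Z := (measurable_const.mul (hXm.sub hYm))
  have hZint : Integrable Z P := ((hX.sub hY).const_mul η)
  have hEm : Measurable fun ω => Real.exp (Z ω) := hZm.exp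
  have hEnn : 0 ≤ᵐ[P] fun ω => Real.exp (Z ω) :=
    Filter.Eventually.of_forall fun ω => (Real.exp_pos _).le
  have hEint : Integrable (fun ω => Real.exp (Z ω)) P := by
    refine ⟨hEm.aestronglyMeasurable, ?_⟩
    rw [hasFiniteIntegral_iff_ofReal hEnn]
    exact lt_of_le_of_lt hESI ENNReal.one_lt_top
  have hEle : ∫ ω, Real.exp (Z ω) ∂P ≤ 1 := by
    rw [integral_eq_lintegral_of_nonneg_ae hEnn hEm.aestronglyMeasurable]
    calc (∫⁻ ω, ENNReal.ofReal (Real.exp (Z ω)) ∂P).toReal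
        ≤ (1 : ENNReal).toReal := ENNReal.toReal_mono (by simp) hESI
      _ = 1 := by simp
  -- integral of Z is ≤ ∫ exp Z - 1 ≤ 0
  have hptw : ∀ ω, Z ω ≤ Real.exp (Z ω) - 1 := fun ω => by
    have := Real.add_one_le_exp (Z ω); linarith
  have hZle : ∫ ω, Z ω ∂P ≤ ∫ ω, (Real.exp (Z ω) - 1) ∂P :=
    integral_mono hZint (hEint.sub (integrable_const 1)) hptw
  have hsub : ∫ ω, (Real.exp (Z ω) - 1) ∂P = (∫ ω, Real.exp (Z ω) ∂P) - 1 := by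
    rw [integral_sub hEint (integrable_const 1)]; simp
  have hZint0 : ∫ ω, Z ω ∂P ≤ 0 := by rw [hsub] at hZle; linarith
  have hZval : ∫ ω, Z ω ∂P = η * ((∫ ω, X ω ∂P) - ∫ ω, Y ω ∂P) := by
    rw [hZdef]
    rw [integral_const_mul, integral_sub hX hY]
  have hle : ∫ ω, X ω ∂P ≤ ∫ ω, Y ω ∂P := by
    rw [hZval] at hZint0
    nlinarith
  refine ⟨hle, fun heq => ?_⟩
  have hZ0 : ∫ ω, Z ω ∂P = 0 := by rw [hZval, heq]; ring
  -- f = exp Z - 1 - Z is nonneg with integral ≤ 0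
  set f : Ω → ℝ := fun ω => Real.exp (Z ω) - 1 - Z ω with hfdef
  have hint1 : Integrable (fun ω => Real.exp (Z ω) - 1) P := hEint.sub (integrable_const 1)
  have hfint : Integrable f P := hint1.sub hZint
  have hfnn : 0 ≤ᵐ[P] f :=
    Filter.Eventually.of_forall fun ω => by
      have := Real.add_one_le_exp (Z ω); simp only [hfdef, Pi.zero_apply]; linarith
  have hfI : ∫ ω, f ω ∂P = 0 := by
    have h1 : ∫ ω, f ω ∂P = (∫ ω, Real.exp (Z ω) ∂P) - 1 - ∫ ω, Z ω ∂P := by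
      simp only [hfdef]
      rw [integral_sub hint1 hZint, hsub]
    have h2 : ∫ ω, f ω ∂P ≤ 0 := by rw [h1, hZ0]; linarith
    have h3 : 0 ≤ ∫ ω, f ω ∂P := integral_nonneg_of_ae hfnn
    linarith
  have hf0 : f =ᵐ[P] 0 := by
    rw [← MeasureTheory.integral_eq_zero_iff_of_nonneg_ae hfnn hfint]
    exact hfI
  refine hf0.mono fun ω hω => ?_
  simp only [hfdef, Pi.zero_apply] at hω
  have hZω : Z ω = 0 := by
    by_contra hne
    have := Real.add_one_lt_exp hne
    linarith
  have : X ω - Y ω = 0 := by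
    have : η * (X ω - Y ω) = 0 := hZω
    rcases mul_eq_zero.mp this with h | h
    · exact absurd h (ne_of_gt hη)
    · exact h
  linarith
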